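/- Let A be a countably infinite set of ordinals, let λ be an uncountable regular cardinal, and let ⟨f_α : α < λ⟩ be a <*-increasing sequence of functions in A → Ord. Suppose ⟨h_ξ : ξ < λ⟩ is a <-pointwise-increasing sequence of functions in A → Ord that is cofinally interleaved with ⟨f_α : α < λ⟩ (for every α there is ξ with f_α <* h_ξ, and for every ξ there is α with h_ξ <* f_α). Then the function g defined by g(i) = sup{h_ξ(i) : ξ < λ} is an exact upper bound for ⟨f_α : α < λ⟩ with respect to <*, and cf(g(i)) = λ for every i ∈ A on which ⟨h_ξ(i) : ξ < λ⟩ is strictly increasing. -/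

import Mathlib

open Cardinal Ordinal

/-- If a pointwise-increasing λ-sequence ⟨h_ξ⟩ is cofinally interleaved with a
`<*`-increasing λ-sequence ⟨f_α⟩ of functions on a countably infinite set A of ordinals, then
g(i) = sup_ξ h_ξ(i) is an exact upper bound for ⟨f_α⟩ with respect to `<*` (the mod-finite
domination order), and cf(g(i)) = λ at every i where ξ ↦ h_ξ(i) is strictly increasing. -/
theorem stmt_2 (A : Set Ordinal) (hAc : A.Countable) (hAi : A.Infinite)
    (lam : Cardinal.{0}) (hreg : lam.IsRegular) (hunc : ℵ₀ < lam)
    (f h : Ordinal → A → Ordinal)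
    (hf : ∀ α < lam.ord, ∀ β < lam.ord, α < β → {i : A | ¬ f α i < f β i}.Finite)
    (hhmono : ∀ ξ < lam.ord, ∀ ζ < lam.ord, ξ < ζ → ∀ i : A, h ξ i < h ζ i)
    (hint₁ : ∀ α < lam.ord, ∃ ξ < lam.ord, {i : A | ¬ f α i < h ξ i}.Finite)
    (hint₂ : ∀ ξ < lam.ord, ∃ α < lam.ord, {i : A | ¬ h ξ i < f α i}.Finite) :
    (∀ α < lam.ord, {i : A | ¬ f α i < (⨆ ξ : Set.Iio lam.ord, h ξ.1 i)}.Finite) ∧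
    (∀ u : A → Ordinal, {i : A | ¬ u i < (⨆ ξ : Set.Iio lam.ord, h ξ.1 i)}.Finite →
      ∃ α < lam.ord, {i : A | ¬ u i < f α i}.Finite) ∧
    (∀ i : A, (∀ ξ < lam.ord, ∀ ζ < lam.ord, ξ < ζ → h ξ i < h ζ i) →
      (⨆ ξ : Set.Iio lam.ord, h ξ.1 i).cof = lam) := by
  have hlim : Order.IsSuccLimit lam.ord := Cardinal.isSuccLimit_ord hreg.aleph0_le
  have hcof : lam.ord.cof = lam := hreg.cof_eq
  have h0 : (0 : Ordinal) < lam.ord := hlim.pos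
  -- monotonicity (non-strict) of h in the first argument, pointwise
  have hmono_le : ∀ ξ < lam.ord, ∀ ζ < lam.ord, ξ ≤ ζ → ∀ i : A, h ξ i ≤ h ζ i := by
    intro ξ hξ ζ hζ hle i
    rcases hle.lt_or_eq with hlt | rfl
    · exact (hhmono ξ hξ ζ hζ hlt i).le
    · exact le_rfl
  refine ⟨?_, ?_, ?_⟩
  · -- upper bound
    intro α hα
    obtain ⟨ξ, hξ, hfin⟩ := hint₁ α hα
    refine hfin.subset fun i hi => ?_
    simp only [Set.mem_setOf_eq] at hi ⊢
    intro hlt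
    exact hi (lt_of_lt_of_le hlt (Ordinal.le_iSup (fun ζ : Set.Iio lam.ord => h ζ.1 i) ⟨ξ, hξ⟩))
  · -- exactness
    intro u hu
    -- enumerate A by ℕ
    haveI := hAc.to_subtype
    haveI := hAi.to_subtype
    obtain ⟨e⟩ : Nonempty (ℕ ≃ A) := nonempty_equiv_of_countable
    classical
    -- for each i with u i < g i, pick a witness ξ
    have key : ∀ i : A, u i < (⨆ ξ : Set.Iio lam.ord, h ξ.1 i) →
        ∃ ξ < lam.ord, u i < h ξ i := by
      intro i hi
      rw [Ordinal.lt_iSup_iff] at hi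
      obtain ⟨⟨ξ, hξ⟩, hlt⟩ := hi
      exact ⟨ξ, hξ, hlt⟩
    set xi : ℕ → Ordinal := fun n =>
      if hi : u (e n) < (⨆ ξ : Set.Iio lam.ord, h ξ.1 (e n)) then (key (e n) hi).choose
      else 0 with hxi
    have hxilt : ∀ n, xi n < lam.ord := by
      intro n
      by_cases hi : u (e n) < (⨆ ξ : Set.Iio lam.ord, h ξ.1 (e n))
      · simp only [hxi, dif_pos hi]
        exact (key (e n) hi).choose_spec.1
      · simp only [hxi, dif_neg hi]
        exact h0
    have hXi : (⨆ n, xi n) < lam.ord := by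
      apply Ordinal.iSup_lt_ord _ hxilt
      rw [hcof, Cardinal.mk_nat]
      exact hunc
    obtain ⟨α, hα, hfin⟩ := hint₂ _ hXi
    refine ⟨α, hα, (hu.union hfin).subset fun i hi => ?_⟩
    simp only [Set.mem_setOf_eq, Set.mem_union] at hi ⊢
    by_contra hcon
    push_neg at hcon
    obtain ⟨hgi, hfi⟩ := hcon
    apply hi
    -- u i < h Ξ i < f α i
    set n := e.symm i with hn
    have hei : e n = i := e.apply_symm_apply i
    have h1 : u i < h (xi n) i := by
      rw [hxi]
      simp only [hei]
      rw [dif_pos hgi]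
      exact (key i hgi).choose_spec.2
    have h2 : h (xi n) i ≤ h (⨆ m, xi m) i :=
      hmono_le _ (hxilt n) _ hXi (Ordinal.le_iSup xi n) i
    exact lt_of_lt_of_le (lt_of_le_of_lt (h1.trans_le h2).le hfi) le_rfl
  · -- cofinality
    intro i hmono
    have hbsup : (⨆ ξ : Set.Iio lam.ord, h ξ.1 i) =
        Ordinal.bsup lam.ord (fun ξ _ => h ξ i) := by
      rw [← Ordinal.sSup_eq_bsup, iSup]
      congr 1
      ext a
      simp [Ordinal.brange, Set.range]
    rw [hbsup]
    have hlt_bsup : ∀ ξ (hξ : ξ < lam.ord),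
        h ξ i < Ordinal.bsup lam.ord (fun ζ _ => h ζ i) := by
      intro ξ hξ
      have hs : ξ < Order.succ ξ := Order.lt_succ ξ
      exact lt_of_lt_of_le (hmono ξ hξ _ (hlim.succ_lt hξ) hs)
        (Ordinal.le_bsup _ _ (hlim.succ_lt hξ))
    refine le_antisymm ?_ ?_
    · have := Ordinal.cof_bsup_le (fun ξ hξ => hlt_bsup ξ hξ)
      rwa [Cardinal.card_ord] at this
    · rw [Ordinal.le_cof_iff_lsub]
      intro ι f' hf'
      by_contra hlt
      push_neg at hlt
      classical
      have hch : ∀ j : ι, ∃ ξ < lam.ord, f' j < h ξ i := by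
        intro j
        have : f' j < Ordinal.bsup lam.ord (fun ζ _ => h ζ i) := by
          rw [← hf']
          exact Ordinal.lt_lsub f' j
        rw [Ordinal.lt_bsup] at this
        obtain ⟨ξ, hξ, hj⟩ := this
        exact ⟨ξ, hξ, hj⟩
      choose xi hxilt hxispec using hch
      have hXi : (⨆ j, xi j) < lam.ord := by
        apply Ordinal.iSup_lt_ord _ hxilt
        rwa [hcof]
      have hub : Ordinal.lsub f' ≤ h (⨆ j, xi j) i := by
        rw [Ordinal.lsub_le_iff]
        intro j
        exact lt_of_lt_of_le (hxispec j)
          (hmono_le _ (hxilt j) _ hXi (Ordinal.le_iSup xi j) i)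
      have : Ordinal.lsub f' < Ordinal.lsub f' := by
        calc Ordinal.lsub f' ≤ h (⨆ j, xi j) i := hub
          _ < Ordinal.bsup lam.ord (fun ζ _ => h ζ i) := hlt_bsup _ hXi
          _ = Ordinal.lsub f' := hf'.symm
      exact this.false
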